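/- arXiv:1303.6023 — 4 statements merged into one kernel-verified Lean document; each statement's English description precedes it below -/
import Mathlib

section
/- Let ρ be a continuous representation of SL(2,ℝ) on a finite-dimensional real normed vector space V, and let u = [[1,t],[0,1]] with t ≠ 0. Then there exists a constant κ > 0 (depending on t) such that for every v ∈ V, max{‖v⁺‖, ‖(uv)⁺ + (uv)⁰‖} ≥ κ‖v‖. -/
open Filter Topology

/-- `SL(2,ℝ)`. -/
abbrev SL2R := Matrix.SpecialLinearGroup (Fin 2) ℝ

/-- The element `a = diag(α, α⁻¹)` of `SL(2,ℝ)`, for `α > 1`. -/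
noncomputable def diagSL (α : ℝ) (hα : 1 < α) : SL2R :=
  ⟨!![α, 0; 0, α⁻¹], by
    have h0 : α ≠ 0 := by linarith
    simp [Matrix.det_fin_two_of, mul_inv_cancel₀ h0]⟩

/-- The unipotent element `u_r = [[1,r],[0,1]]` of `SL(2,ℝ)`. -/
def uSL (r : ℝ) : SL2R :=
  ⟨!![1, r; 0, 1], by simp [Matrix.det_fin_two_of]⟩

/-- Topology on `SL(2,ℝ)`, induced from the matrix entries. -/
noncomputable instance : TopologicalSpace SL2R :=
  TopologicalSpace.induced (fun g => (g : Matrix (Fin 2) (Fin 2) ℝ)) inferInstance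

section Spaces

variable {V : Type*} [NormedAddCommGroup V] [NormedSpace ℝ V]

/-- `V⁺ = {v : a^{−k} v → 0}` (with respect to `ρ` and `a`). -/
def Vplus (ρ : SL2R →* (V →ₗ[ℝ] V)) (a : SL2R) : Set V :=
  {v | Tendsto (fun k : ℕ => ((ρ a⁻¹) ^ k) v) atTop (𝓝 0)}

/-- `V⁰ = {v : a v = v}` (with respect to `ρ` and `a`). -/
def Vzero (ρ : SL2R →* (V →ₗ[ℝ] V)) (a : SL2R) : Set V :=
  {v | ρ a v = v}

/-- `V⁻ = {v : a^k v → 0}` (with respect to `ρ` and `a`). -/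
def Vminus (ρ : SL2R →* (V →ₗ[ℝ] V)) (a : SL2R) : Set V :=
  {v | Tendsto (fun k : ℕ => ((ρ a) ^ k) v) atTop (𝓝 0)}

end Spaces

/-! ### Auxiliary group elements and identities in `SL(2,ℝ)` -/

/-- The lower unipotent `[[1,0],[r,1]]`. -/
def lowSL (r : ℝ) : SL2R :=
  ⟨!![1, 0; r, 1], by simp [Matrix.det_fin_two_of]⟩

/-- The diagonal element `diag(μ, μ⁻¹)` for `μ ≠ 0`. -/
noncomputable def dgSL (μ : ℝ) (hμ : μ ≠ 0) : SL2R :=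
  ⟨!![μ, 0; 0, μ⁻¹], by simp [Matrix.det_fin_two_of, mul_inv_cancel₀ hμ]⟩

/-- The Weyl element `[[0,1],[-1,0]]`. -/
def wSL : SL2R := ⟨!![0, 1; -1, 0], by simp [Matrix.det_fin_two_of]⟩

/-- The inverse Weyl element `[[0,-1],[1,0]]`. -/
def wSL' : SL2R := ⟨!![0, -1; 1, 0], by simp [Matrix.det_fin_two_of]⟩

lemma sl2_ext {A B : SL2R} (h : (A : Matrix (Fin 2) (Fin 2) ℝ) = B) : A = B := Subtype.ext h

lemma lowSL_zero : lowSL 0 = 1 := by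
  apply sl2_ext
  show !![(1:ℝ),0;0,1] = _
  rw [← Matrix.one_fin_two]; rfl

lemma gid6 : wSL' * wSL = 1 := by
  apply sl2_ext
  simp only [Matrix.SpecialLinearGroup.coe_mul]
  simp [wSL, wSL', Matrix.SpecialLinearGroup.coe_mul, Matrix.mul_fin_two]
  rw [← Matrix.one_fin_two]

lemma gid5 (c : ℝ) : lowSL (-c) * lowSL c = 1 := by
  apply sl2_ext
  simp only [Matrix.SpecialLinearGroup.coe_mul]
  simp [lowSL, Matrix.SpecialLinearGroup.coe_mul, Matrix.mul_fin_two]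
  rw [← Matrix.one_fin_two]

lemma gid1 {t : ℝ} (ht : t ≠ 0) :
    wSL * lowSL t⁻¹ = lowSL (-t) * dgSL t⁻¹ (inv_ne_zero ht) * uSL t := by
  apply sl2_ext
  simp only [Matrix.SpecialLinearGroup.coe_mul]
  simp [wSL, lowSL, dgSL, uSL, Matrix.SpecialLinearGroup.coe_mul, Matrix.mul_fin_two]
  exact ⟨(inv_mul_cancel₀ ht).symm, (mul_inv_cancel₀ ht).symm⟩

lemma gid2 {α : ℝ} (hα : 1 < α) {μ : ℝ} (hμ : μ ≠ 0) :
    dgSL μ hμ * diagSL α hα = diagSL α hα * dgSL μ hμ := by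
  apply sl2_ext
  simp only [Matrix.SpecialLinearGroup.coe_mul]
  simp [dgSL, diagSL, Matrix.SpecialLinearGroup.coe_mul, Matrix.mul_fin_two]
  ring_nf
  exact ⟨trivial, trivial⟩

lemma gid3 {α : ℝ} (hα : 1 < α) (c : ℝ) :
    diagSL α hα * lowSL c = lowSL (c * (α⁻¹)^2) * diagSL α hα := by
  have h0 : α ≠ 0 := by positivity
  apply sl2_ext
  simp only [Matrix.SpecialLinearGroup.coe_mul]
  simp [lowSL, diagSL, Matrix.SpecialLinearGroup.coe_mul, Matrix.mul_fin_two]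
  field_simp

lemma gid4 {α : ℝ} (hα : 1 < α) : diagSL α hα * wSL' * diagSL α hα = wSL' := by
  have h0 : α ≠ 0 := by positivity
  apply sl2_ext
  simp only [Matrix.SpecialLinearGroup.coe_mul]
  simp [wSL', diagSL, Matrix.SpecialLinearGroup.coe_mul, Matrix.mul_fin_two]
  exact ⟨mul_inv_cancel₀ h0, inv_mul_cancel₀ h0⟩

lemma gid3k {α : ℝ} (hα : 1 < α) (c : ℝ) (k : ℕ) :
    (diagSL α hα)^k * lowSL c = lowSL (c * ((α⁻¹)^2)^k) * (diagSL α hα)^k := by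
  induction k generalizing c with
  | zero => simp
  | succ n ih =>
      rw [pow_succ, mul_assoc, gid3, ← mul_assoc, ih, mul_assoc, ← pow_succ]
      congr 2
      ring

lemma gid4k {α : ℝ} (hα : 1 < α) (k : ℕ) :
    ((diagSL α hα)⁻¹)^k * wSL' = wSL' * (diagSL α hα)^k := by
  have h1 : (diagSL α hα)⁻¹ * wSL' = wSL' * diagSL α hα := by
    calc (diagSL α hα)⁻¹ * wSL' = (diagSL α hα)⁻¹ * (diagSL α hα * wSL' * diagSL α hα) := by
          rw [gid4 hα]
        _ = wSL' * diagSL α hα := by group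
  induction k with
  | zero => simp
  | succ n ih =>
      rw [pow_succ, mul_assoc, h1, ← mul_assoc, ih, mul_assoc, ← pow_succ]

lemma cont_lowSL : Continuous lowSL := by
  apply continuous_induced_rng.mpr
  show Continuous fun r : ℝ => !![(1:ℝ), 0; r, 1]
  apply continuous_matrix
  intro i j
  fin_cases i <;> fin_cases j <;> simp <;> [exact continuous_const; exact continuous_const;
    exact continuous_id; exact continuous_const]

/-! ### Operator-valued continuity helpers -/

section Main
variable {V : Type*} [NormedAddCommGroup V] [NormedSpace ℝ V] [FiniteDimensional ℝ V]
variable (ρ : SL2R →* (V →ₗ[ℝ] V)) (hρ_cont : ∀ v : V, Continuous fun g => ρ g v)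

/-- `ρ` with values in continuous linear maps. -/
noncomputable def Pi' (g : SL2R) : V →L[ℝ] V := LinearMap.toContinuousLinearMap (ρ g)

@[simp] lemma Pi'_apply (g : SL2R) (x : V) : Pi' ρ g x = ρ g x := rfl

include hρ_cont in
lemma cont_Pi' : Continuous (Pi' ρ) := by
  rw [continuous_clm_apply]
  intro y
  exact hρ_cont y

lemma tendsto_apply_clm {f : ℕ → V →L[ℝ] V} {g : ℕ → V} {F : V →L[ℝ] V} {y : V}
    (hf : Tendsto f atTop (𝓝 F)) (hg : Tendsto g atTop (𝓝 y)) :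
    Tendsto (fun k => f k (g k)) atTop (𝓝 (F y)) := by
  have hc : Continuous fun p : (V →L[ℝ] V) × V => p.1 p.2 :=
    isBoundedBilinearMap_apply.continuous
  exact (hc.tendsto (F, y)).comp (hf.prodMk_nhds hg)

variable {α : ℝ} (hα : 1 < α)

lemma key_low (c : ℝ) (x : V) (k : ℕ) :
    ((ρ (diagSL α hα))^k) (ρ (lowSL c) x)
      = Pi' ρ (lowSL (c * ((α⁻¹)^2)^k)) (((ρ (diagSL α hα))^k) x) := by
  calc ((ρ (diagSL α hα))^k) (ρ (lowSL c) x) = (ρ ((diagSL α hα)^k * lowSL c)) x := by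
        rw [map_mul, map_pow, Module.End.mul_apply]
    _ = (ρ (lowSL (c * ((α⁻¹)^2)^k) * (diagSL α hα)^k)) x := by rw [gid3k]
    _ = Pi' ρ (lowSL (c * ((α⁻¹)^2)^k)) (((ρ (diagSL α hα))^k) x) := by
        rw [map_mul, map_pow, Module.End.mul_apply, Pi'_apply]

include hα in
lemma tendsto_beta (c : ℝ) : Tendsto (fun k : ℕ => c * ((α⁻¹)^2)^k) atTop (𝓝 0) := by
  have h0 : (0:ℝ) < α⁻¹ := by positivity
  have h1 : α⁻¹ < 1 := inv_lt_one_of_one_lt₀ hα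
  have hβ : ((α⁻¹:ℝ))^2 < 1 := by nlinarith
  have := (tendsto_pow_atTop_nhds_zero_of_lt_one (by positivity) hβ).const_mul c
  simpa using this

include hρ_cont in
lemma tendsto_low_apply {c : ℕ → ℝ} (hc : Tendsto c atTop (𝓝 0)) {g : ℕ → V} {y : V}
    (hg : Tendsto g atTop (𝓝 y)) :
    Tendsto (fun k => Pi' ρ (lowSL (c k)) (g k)) atTop (𝓝 y) := by
  have h1 : Tendsto (fun k => lowSL (c k)) atTop (𝓝 (lowSL 0)) :=
    (cont_lowSL.tendsto 0).comp hc
  have h2 := ((cont_Pi' ρ hρ_cont).tendsto (lowSL 0)).comp h1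
  have h3 := tendsto_apply_clm h2 hg
  simpa [lowSL_zero, map_one] using h3

include hρ_cont in
lemma mem_Vminus_low (c : ℝ) {x : V} (hx : x ∈ Vminus ρ (diagSL α hα)) :
    ρ (lowSL c) x ∈ Vminus ρ (diagSL α hα) := by
  show Tendsto _ atTop (𝓝 0)
  simp only [key_low ρ hα c x]
  exact tendsto_low_apply ρ hρ_cont (tendsto_beta hα c) hx

lemma mem_Vminus_dg {μ : ℝ} (hμ : μ ≠ 0) {x : V} (hx : x ∈ Vminus ρ (diagSL α hα)) :
    ρ (dgSL μ hμ) x ∈ Vminus ρ (diagSL α hα) := by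
  have hc : Commute (dgSL μ hμ) (diagSL α hα) := gid2 hα hμ
  have key : ∀ k : ℕ, ((ρ (diagSL α hα))^k) (ρ (dgSL μ hμ) x)
      = ρ (dgSL μ hμ) (((ρ (diagSL α hα))^k) x) := by
    intro k
    rw [← Module.End.mul_apply, ← Module.End.mul_apply, ← map_pow, ← map_mul, ← map_mul,
      (hc.symm.pow_left k).eq]
  show Tendsto _ atTop (𝓝 0)
  simp only [key]
  have hcont : Continuous (ρ (dgSL μ hμ)) := LinearMap.continuous_of_finiteDimensional _
  simpa [map_zero, Function.comp_def] using (hcont.tendsto 0).comp hx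

lemma mem_Vplus_w' {x : V} (hx : x ∈ Vminus ρ (diagSL α hα)) :
    ρ wSL' x ∈ Vplus ρ (diagSL α hα) := by
  have key : ∀ k : ℕ, ((ρ (diagSL α hα)⁻¹)^k) (ρ wSL' x)
      = ρ wSL' (((ρ (diagSL α hα))^k) x) := by
    intro k
    rw [← Module.End.mul_apply, ← Module.End.mul_apply, ← map_pow, ← map_pow, ← map_mul,
      ← map_mul, gid4k hα k]
  show Tendsto _ atTop (𝓝 0)
  simp only [key]
  have hcont : Continuous (ρ wSL') := LinearMap.continuous_of_finiteDimensional _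
  simpa [map_zero, Function.comp_def] using (hcont.tendsto 0).comp hx

lemma mem_Vplus_a {x : V} (hx : x ∈ Vplus ρ (diagSL α hα)) :
    ρ (diagSL α hα) x ∈ Vplus ρ (diagSL α hα) := by
  have hc : ∀ k : ℕ, ((diagSL α hα)⁻¹)^k * diagSL α hα
      = diagSL α hα * ((diagSL α hα)⁻¹)^k :=
    fun k => (((Commute.refl (diagSL α hα)).inv_left).pow_left k).eq
  have key : ∀ k : ℕ, ((ρ (diagSL α hα)⁻¹)^k) (ρ (diagSL α hα) x)
      = ρ (diagSL α hα) (((ρ (diagSL α hα)⁻¹)^k) x) := by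
    intro k
    rw [← Module.End.mul_apply, ← Module.End.mul_apply, ← map_pow, ← map_mul,
      ← map_mul, hc k]
  show Tendsto _ atTop (𝓝 0)
  simp only [key]
  have hcont : Continuous (ρ (diagSL α hα)) := LinearMap.continuous_of_finiteDimensional _
  simpa [map_zero, Function.comp_def] using (hcont.tendsto 0).comp hx

lemma Vzero_pow {z : V} (hz : z ∈ Vzero ρ (diagSL α hα)) (k : ℕ) :
    ((ρ (diagSL α hα))^k) z = z := by
  induction k with
  | zero => simp
  | succ n ih => rw [pow_succ, Module.End.mul_apply, hz, ih]

lemma zero_Vplus : (0:V) ∈ Vplus ρ (diagSL α hα) := by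
  show Tendsto _ atTop (𝓝 0)
  simp only [map_zero]
  exact tendsto_const_nhds

lemma zero_Vzero : (0:V) ∈ Vzero ρ (diagSL α hα) := by
  show ρ (diagSL α hα) 0 = 0
  simp

lemma zero_Vminus : (0:V) ∈ Vminus ρ (diagSL α hα) := by
  show Tendsto _ atTop (𝓝 0)
  simp only [map_zero]
  exact tendsto_const_nhds

include hρ_cont in
/-- Core injectivity: if `v⁺ = 0` and `(uv)⁺ + (uv)⁰ = 0` then `v = 0`. -/
lemma core (qp q0 qm : V →ₗ[ℝ] V)
    (hdecomp : ∀ v : V, qp v ∈ Vplus ρ (diagSL α hα) ∧ q0 v ∈ Vzero ρ (diagSL α hα) ∧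
      qm v ∈ Vminus ρ (diagSL α hα) ∧ qp v + q0 v + qm v = v)
    (huniq : ∀ v p z m : V, p ∈ Vplus ρ (diagSL α hα) → z ∈ Vzero ρ (diagSL α hα) →
      m ∈ Vminus ρ (diagSL α hα) → v = p + z + m → p = qp v ∧ z = q0 v ∧ m = qm v)
    {t : ℝ} (ht : t ≠ 0) (v : V)
    (h1 : qp v = 0) (h2 : qp (ρ (uSL t) v) + q0 (ρ (uSL t) v) = 0) : v = 0 := by
  set a := diagSL α hα with ha
  -- `u t v ∈ V⁻`
  have huv : ρ (uSL t) v ∈ Vminus ρ a := by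
    have hd := hdecomp (ρ (uSL t) v)
    have h3 := hd.2.2.2
    rw [h2, zero_add] at h3
    rw [← h3]
    exact hd.2.2.1
  -- `v₁ := l_{1/t} v ∈ V⁺`
  set v₁ : V := ρ (lowSL t⁻¹) v with hv₁
  have hwv : ρ wSL (ρ (lowSL t⁻¹) v) ∈ Vminus ρ a := by
    have : ρ wSL (ρ (lowSL t⁻¹) v)
        = ρ (lowSL (-t)) (ρ (dgSL t⁻¹ (inv_ne_zero ht)) (ρ (uSL t) v)) := by
      rw [← Module.End.mul_apply, ← map_mul, gid1 ht, map_mul, map_mul,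
        Module.End.mul_apply, Module.End.mul_apply]
    rw [this]
    exact mem_Vminus_low ρ hρ_cont hα _ (mem_Vminus_dg ρ hα _ huv)
  have hv1p : v₁ ∈ Vplus ρ a := by
    have : v₁ = ρ wSL' (ρ wSL (ρ (lowSL t⁻¹) v)) := by
      rw [← Module.End.mul_apply, ← Module.End.mul_apply, ← map_mul, ← map_mul,
        gid6, one_mul]
    rw [this]
    exact mem_Vplus_w' ρ hα hwv
  -- `a^k v → z := q0 v`
  set z : V := q0 v with hz
  have hAkv : ∀ k : ℕ, ((ρ a)^k) v = z + ((ρ a)^k) (qm v) := by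
    intro k
    conv_lhs => rw [← (hdecomp v).2.2.2]
    rw [h1, zero_add, map_add, Vzero_pow ρ hα (hdecomp v).2.1]
  have hAkvt : Tendsto (fun k : ℕ => ((ρ a)^k) v) atTop (𝓝 z) := by
    simp only [hAkv]
    simpa using tendsto_const_nhds.add (hdecomp v).2.2.1
  -- `a^k v₁ → z`
  have hAkv1 : ∀ k : ℕ, ((ρ a)^k) v₁
      = Pi' ρ (lowSL (t⁻¹ * ((α⁻¹)^2)^k)) (((ρ a)^k) v) := fun k => key_low ρ hα t⁻¹ v k
  have hlim : Tendsto (fun k : ℕ => ((ρ a)^k) v₁) atTop (𝓝 z) := by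
    simp only [hAkv1]
    exact tendsto_low_apply ρ hρ_cont (tendsto_beta hα t⁻¹) hAkvt
  -- all `a^k v₁` lie in the (closed) range of `qp`, hence so does `z`
  have hfixp : ∀ x ∈ Vplus ρ a, qp x = x := fun x hx =>
    ((huniq x x 0 0 hx (zero_Vzero ρ hα) (zero_Vminus ρ hα) (by simp)).1).symm
  have hmemVp : ∀ k : ℕ, ((ρ a)^k) v₁ ∈ Vplus ρ a := by
    intro k
    induction k with
    | zero => simpa using hv1p
    | succ n ih =>
        rw [pow_succ', Module.End.mul_apply]
        exact mem_Vplus_a ρ hα ih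
  have hPclosed : IsClosed ((LinearMap.range qp : Submodule ℝ V) : Set V) :=
    Submodule.closed_of_finiteDimensional _
  have hzP : z ∈ (LinearMap.range qp : Submodule ℝ V) := by
    refine hPclosed.mem_of_tendsto hlim (Filter.Eventually.of_forall fun k => ?_)
    exact ⟨((ρ a)^k) v₁, hfixp _ (hmemVp k)⟩
  have hzVp : z ∈ Vplus ρ a := by
    obtain ⟨w, hw⟩ := hzP
    rw [← hw]
    exact (hdecomp w).1
  -- `z ∈ V⁺ ∩ V⁰` hence `z = 0`
  have hz0 : z = 0 := by
    have e1 : z = qp z :=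
      (huniq z z 0 0 hzVp (zero_Vzero ρ hα) (zero_Vminus ρ hα) (by simp)).1
    have e2 : (0:V) = qp z :=
      (huniq z 0 z 0 (zero_Vplus ρ hα) (hdecomp v).2.1 (zero_Vminus ρ hα) (by simp)).1
    rw [e1, ← e2]
  -- hence `v₁ ∈ V⁻ ∩ V⁺`, so `v₁ = 0`
  have hv1m : v₁ ∈ Vminus ρ a := by
    show Tendsto _ atTop (𝓝 0)
    rw [← hz0]
    exact hlim
  have hv10 : v₁ = 0 := by
    have e1 : v₁ = qp v₁ :=
      (huniq v₁ v₁ 0 0 hv1p (zero_Vzero ρ hα) (zero_Vminus ρ hα) (by simp)).1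
    have e2 : (0:V) = qp v₁ :=
      (huniq v₁ 0 0 v₁ (zero_Vplus ρ hα) (zero_Vzero ρ hα) hv1m (by simp)).1
    rw [e1, ← e2]
  -- conclude
  have : v = ρ (lowSL (-t⁻¹)) v₁ := by
    rw [hv₁, ← Module.End.mul_apply, ← map_mul, gid5, map_one, Module.End.one_apply]
  rw [this, hv10, map_zero]

end Main

theorem stmt4
    {V : Type*} [NormedAddCommGroup V] [NormedSpace ℝ V] [FiniteDimensional ℝ V]
    (ρ : SL2R →* (V →ₗ[ℝ] V)) (hρ_cont : ∀ v : V, Continuous fun g => ρ g v)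
    {α : ℝ} (hα : 1 < α)
    (qp q0 qm : V →ₗ[ℝ] V)
    (hdecomp : ∀ v : V, qp v ∈ Vplus ρ (diagSL α hα) ∧ q0 v ∈ Vzero ρ (diagSL α hα) ∧
      qm v ∈ Vminus ρ (diagSL α hα) ∧ qp v + q0 v + qm v = v)
    (huniq : ∀ v p z m : V, p ∈ Vplus ρ (diagSL α hα) → z ∈ Vzero ρ (diagSL α hα) →
      m ∈ Vminus ρ (diagSL α hα) → v = p + z + m → p = qp v ∧ z = q0 v ∧ m = qm v)
    {t : ℝ} (ht : t ≠ 0) :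
    ∃ κ : ℝ, 0 < κ ∧ ∀ v : V,
      κ * ‖v‖ ≤ max ‖qp v‖ ‖qp (ρ (uSL t) v) + q0 (ρ (uSL t) v)‖ := by
  classical
  set T : V →ₗ[ℝ] V × V :=
    LinearMap.prod qp ((qp + q0).comp (ρ (uSL t))) with hT
  have hTapp : ∀ v : V, T v = (qp v, qp (ρ (uSL t) v) + q0 (ρ (uSL t) v)) := by
    intro v
    simp [hT, LinearMap.prod_apply, LinearMap.add_apply, LinearMap.comp_apply]
  have hinj : Function.Injective T := by
    rw [← LinearMap.ker_eq_bot]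
    rw [LinearMap.ker_eq_bot']
    intro v hv
    rw [hTapp v, Prod.mk_eq_zero] at hv
    exact core ρ hρ_cont hα qp q0 qm hdecomp huniq ht v hv.1 hv.2
  let e : V ≃ₗ[ℝ] LinearMap.range T := LinearEquiv.ofInjective T hinj
  let ec : V ≃L[ℝ] LinearMap.range T := e.toContinuousLinearEquiv
  obtain ⟨K, hK⟩ : ∃ K : NNReal, AntilipschitzWith K ec := ⟨_, ec.antilipschitz⟩
  set K0 : ℝ := max (K:ℝ) 1 with hK0
  have hK0pos : (0:ℝ) < K0 := lt_of_lt_of_le one_pos (le_max_right _ _)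
  refine ⟨K0⁻¹, by positivity, fun v => ?_⟩
  have hb : ‖v‖ ≤ K0 * ‖T v‖ := by
    have h1 : ‖v‖ ≤ K * ‖ec v‖ := by
      have := hK.le_mul_dist v 0
      simpa [dist_eq_norm, map_zero] using this
    have h2 : ‖ec v‖ = ‖T v‖ := by
      show ‖(ec v : V × V)‖ = _
      congr 1
    calc ‖v‖ ≤ K * ‖ec v‖ := h1
      _ = K * ‖T v‖ := by rw [h2]
      _ ≤ K0 * ‖T v‖ := by
          have : (K:ℝ) ≤ K0 := le_max_left _ _
          exact mul_le_mul_of_nonneg_right this (norm_nonneg _)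
  have hTnorm : ‖T v‖ = max ‖qp v‖ ‖qp (ρ (uSL t) v) + q0 (ρ (uSL t) v)‖ := by
    rw [hTapp v, Prod.norm_def]
  rw [← hTnorm]
  rw [inv_mul_le_iff₀ hK0pos]
  exact hb
end

section
/- Let p be a positive integer, let r be a nonzero real number, and let c_p, c_{p+1}, …, c_{2p} be real numbers such that for every j ∈ {0, 1, …, p−1} one has Σ_{k=p}^{2p} C(k,j) r^{k−j} c_k = 0, where C(k,j) denotes the binomial coefficient. Then Σ_{k=p}^{2p} C(k,p) r^{k−p} c_k = (−1)^p c_p. -/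
open Finset

/-- `Ring.choose` at a negative integer: `C(-n-1, j) = (-1)^j C(n+j, j)`. -/
lemma neg_ring_choose (n j : ℕ) :
    Ring.choose (-(n : ℤ) - 1) j = (-1) ^ j * ((n + j).choose j : ℤ) := by
  have h := Ring.descPochhammer_eq_factorial_smul_choose (R := ℤ) (-(n : ℤ) - 1) j
  rw [← Polynomial.eval_eq_smeval, descPochhammer_eval_eq_ascPochhammer] at h
  have e1 : (-(n : ℤ) - 1 - j + 1) = -((n + j : ℕ) : ℤ) := by push_cast; ring
  rw [e1, ascPochhammer_eval_neg_eq_descPochhammer, descPochhammer_eval_eq_descFactorial,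
    Nat.descFactorial_eq_factorial_mul_choose] at h
  have hj : ((j.factorial : ℤ)) ≠ 0 := by exact_mod_cast j.factorial_ne_zero
  apply mul_left_cancel₀ hj
  rw [← nsmul_eq_mul, ← h]
  push_cast
  ring

/-- Key identity: for `p ≤ k ≤ 2p`,
`Σ_{j=0}^{p} (-1)^{p-j} C(2p-j, p-j) C(k,j) = (-1)^p δ_{k,p}`. -/
lemma key_ident (p k : ℕ) (h1 : p ≤ k) (h2 : k ≤ 2 * p) :
    ∑ j ∈ range (p + 1), (-1 : ℤ) ^ (p - j) * ((2 * p - j).choose (p - j) : ℤ) * (k.choose j : ℤ)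
      = if k = p then (-1) ^ p else 0 := by
  have hV := Ring.add_choose_eq (R := ℤ) (r := (k : ℤ)) (s := -(p : ℤ) - 1) p (Commute.all _ _)
  rw [Finset.Nat.sum_antidiagonal_eq_sum_range_succ_mk] at hV
  have hterm : ∀ j ∈ range (p + 1),
      Ring.choose (k : ℤ) j * Ring.choose (-(p : ℤ) - 1) (p - j)
      = (-1 : ℤ) ^ (p - j) * ((2 * p - j).choose (p - j) : ℤ) * (k.choose j : ℤ) := by
    intro j hj
    have hj' : j ≤ p := by simpa [Nat.lt_succ_iff] using hj
    have hpj : p + (p - j) = 2 * p - j := by omega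
    rw [Ring.choose_natCast, neg_ring_choose, hpj]
    ring
  rw [Finset.sum_congr rfl hterm] at hV
  rw [← hV]
  by_cases hk : k = p
  · have e : ((k : ℤ) + (-(p : ℤ) - 1)) = -((0 : ℕ) : ℤ) - 1 := by rw [hk]; push_cast; ring
    rw [if_pos hk, e, neg_ring_choose 0 p]
    simp
  · have hk' : p + 1 ≤ k := by omega
    have e : ((k : ℤ) + (-(p : ℤ) - 1)) = ((k - (p + 1) : ℕ) : ℤ) := by
      rw [Nat.cast_sub hk']; push_cast; ring
    rw [if_neg hk, e, Ring.choose_natCast, Nat.choose_eq_zero_of_lt (by omega), Nat.cast_zero]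

/-- if `Σ_{k=p}^{2p} C(k,j) r^{k−j} c_k = 0` for all `0 ≤ j ≤ p−1`, where
`r ≠ 0` and `p ≥ 1`, then `Σ_{k=p}^{2p} C(k,p) r^{k−p} c_k = (−1)^p c_p`. -/
theorem stmt8 (p : ℕ) (hp : 0 < p) (r : ℝ) (hr : r ≠ 0) (c : ℕ → ℝ)
    (hvanish : ∀ j : ℕ, j < p →
      ∑ k ∈ Finset.Icc p (2 * p), (Nat.choose k j : ℝ) * r ^ (k - j) * c k = 0) :
    ∑ k ∈ Finset.Icc p (2 * p), (Nat.choose k p : ℝ) * r ^ (k - p) * c k = (-1 : ℝ) ^ p * c p := by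
  have key' : ∀ k, p ≤ k → k ≤ 2 * p →
      ∑ j ∈ range (p + 1),
        (-1 : ℝ) ^ (p - j) * ((2 * p - j).choose (p - j) : ℝ) * (k.choose j : ℝ)
      = if k = p then (-1 : ℝ) ^ p else 0 := by
    intro k h1 h2
    have h := congrArg (fun z : ℤ => (z : ℝ)) (key_ident p k h1 h2)
    push_cast at h
    simpa [apply_ite (fun z : ℤ => (z : ℝ))] using h
  let S : ℕ → ℝ := fun j => ∑ k ∈ Finset.Icc p (2 * p), (Nat.choose k j : ℝ) * r ^ (k - j) * c k
  have hSdef : ∀ j, S j = ∑ k ∈ Finset.Icc p (2 * p), (Nat.choose k j : ℝ) * r ^ (k - j) * c k :=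
    fun j => rfl
  have hcomb :
      ∑ j ∈ range (p + 1),
        ((-1 : ℝ) ^ (p - j) * ((2 * p - j).choose (p - j) : ℝ) * r ^ j) * S j
      = r ^ p * S p := by
    rw [Finset.sum_range_succ]
    have hz : ∀ j ∈ range p,
        ((-1 : ℝ) ^ (p - j) * ((2 * p - j).choose (p - j) : ℝ) * r ^ j) * S j = 0 := by
      intro j hj
      rw [hSdef, hvanish j (Finset.mem_range.mp hj), mul_zero]
    rw [Finset.sum_eq_zero hz, zero_add, Nat.sub_self]
    simp
  have hcomb2 :
      ∑ j ∈ range (p + 1),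
        ((-1 : ℝ) ^ (p - j) * ((2 * p - j).choose (p - j) : ℝ) * r ^ j) * S j
      = (-1 : ℝ) ^ p * (r ^ p * c p) := by
    simp only [hSdef, Finset.mul_sum]
    rw [Finset.sum_comm]
    have hinner : ∀ k ∈ Finset.Icc p (2 * p),
        ∑ j ∈ range (p + 1),
          ((-1 : ℝ) ^ (p - j) * ((2 * p - j).choose (p - j) : ℝ) * r ^ j) *
            ((Nat.choose k j : ℝ) * r ^ (k - j) * c k)
        = (if k = p then (-1 : ℝ) ^ p else 0) * (r ^ k * c k) := by
      intro k hk
      obtain ⟨hk1, hk2⟩ := Finset.mem_Icc.mp hk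
      rw [← key' k hk1 hk2, Finset.sum_mul]
      apply Finset.sum_congr rfl
      intro j hj
      have hjk : j ≤ k := le_trans (by simpa [Nat.lt_succ_iff] using hj) hk1
      have hr' : r ^ j * r ^ (k - j) = r ^ k := by
        rw [← pow_add]
        congr 1
        omega
      calc ((-1 : ℝ) ^ (p - j) * ((2 * p - j).choose (p - j) : ℝ) * r ^ j) *
            ((Nat.choose k j : ℝ) * r ^ (k - j) * c k)
          = ((-1 : ℝ) ^ (p - j) * ((2 * p - j).choose (p - j) : ℝ) * (Nat.choose k j : ℝ)) *
            ((r ^ j * r ^ (k - j)) * c k) := by ring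
        _ = _ := by rw [hr']
    rw [Finset.sum_congr rfl hinner]
    rw [Finset.sum_eq_single_of_mem p (Finset.mem_Icc.mpr ⟨le_refl p, by omega⟩)]
    · simp
    · intro k _ hkp
      rw [if_neg hkp, zero_mul]
  have hfinal : r ^ p * S p = r ^ p * ((-1 : ℝ) ^ p * c p) := by
    rw [← hcomb, hcomb2]; ring
  have := mul_left_cancel₀ (pow_ne_zero p hr) hfinal
  rw [hSdef] at this
  exact this
end

section
/- Let p be a positive integer, let r be a nonzero real number, and let c_p, c_{p+1}, …, c_{2p} be real numbers such that c_p = 0 and for every j ∈ {0, 1, …, p−1} one has Σ_{k=p}^{2p} C(k,j) r^{k−j} c_k = 0, where C(k,j) denotes the binomial coefficient. Then c_k = 0 for every k ∈ {p, p+1, …, 2p}. -/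
/-- if `c_p = 0` and `Σ_{k=p}^{2p} C(k,j) r^{k−j} c_k = 0` for all `0 ≤ j ≤ p−1`,
where `r ≠ 0` and `p ≥ 1`, then `c_k = 0` for all `p ≤ k ≤ 2p`. -/
theorem stmt9 (p : ℕ) (hp : 0 < p) (r : ℝ) (hr : r ≠ 0) (c : ℕ → ℝ) (hcp : c p = 0)
    (hvanish : ∀ j : ℕ, j < p →
      ∑ k ∈ Finset.Icc p (2 * p), (Nat.choose k j : ℝ) * r ^ (k - j) * c k = 0) :
    ∀ k ∈ Finset.Icc p (2 * p), c k = 0 := by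
  set Q : Polynomial ℝ := ∑ k ∈ Finset.Icc p (2 * p), Polynomial.C (c k) * Polynomial.X ^ k
    with hQdef
  have hcoeff : ∀ m, Q.coeff m = if m ∈ Finset.Icc p (2 * p) then c m else 0 := by
    intro m
    rw [hQdef, Polynomial.finset_sum_coeff]
    simp only [Polynomial.coeff_C_mul, Polynomial.coeff_X_pow, mul_ite, mul_one, mul_zero]
    rw [Finset.sum_ite_eq (Finset.Icc p (2 * p)) m c]
  -- Taylor coefficients at r vanish below p
  have htaylor : ∀ j, j < p → ((Polynomial.taylor r) Q).coeff j = 0 := by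
    intro j hj
    rw [Polynomial.taylor_coeff, hQdef, map_sum, Polynomial.eval_finset_sum, ← hvanish j hj]
    apply Finset.sum_congr rfl
    intro k _
    simp [Polynomial.C_mul_X_pow_eq_monomial, Polynomial.hasseDeriv_monomial,
      Polynomial.eval_monomial]
    ring
  have hdvd2 : (Polynomial.X - Polynomial.C r) ^ p ∣ Q := by
    conv_rhs => rw [← Polynomial.sum_taylor_eq Q r]
    rw [Polynomial.sum]
    apply Finset.dvd_sum
    intro i hi
    have hip : p ≤ i := by
      by_contra h
      push_neg at h
      exact Polynomial.mem_support_iff.mp hi (htaylor i h)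
    exact Dvd.dvd.mul_left (pow_dvd_pow _ hip) _
  have hdvd1 : (Polynomial.X : Polynomial ℝ) ^ (p + 1) ∣ Q := by
    rw [Polynomial.X_pow_dvd_iff]
    intro d hd
    rw [hcoeff d]
    split_ifs with h
    · simp only [Finset.mem_Icc] at h
      have : d = p := by omega
      rw [this, hcp]
    · rfl
  have hbase : IsCoprime (Polynomial.X : Polynomial ℝ) (Polynomial.X - Polynomial.C r) := by
    refine ⟨Polynomial.C r⁻¹, -Polynomial.C r⁻¹, ?_⟩
    have h1 : (Polynomial.C r⁻¹ : Polynomial ℝ) * Polynomial.C r = 1 := by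
      rw [← Polynomial.C_mul, inv_mul_cancel₀ hr, Polynomial.C_1]
    calc Polynomial.C r⁻¹ * Polynomial.X
          + -Polynomial.C r⁻¹ * (Polynomial.X - Polynomial.C r)
        = Polynomial.C r⁻¹ * Polynomial.C r := by ring
      _ = 1 := h1
  have hmul : (Polynomial.X : Polynomial ℝ) ^ (p + 1)
      * (Polynomial.X - Polynomial.C r) ^ p ∣ Q :=
    (hbase.pow).mul_dvd hdvd1 hdvd2
  have hQ0 : Q = 0 := by
    by_contra hne
    have hdeg := Polynomial.natDegree_le_of_dvd hmul hne
    have hXne : (Polynomial.X : Polynomial ℝ) ^ (p + 1) ≠ 0 := pow_ne_zero _ Polynomial.X_ne_zero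
    have hXrne : (Polynomial.X - Polynomial.C r) ^ p ≠ 0 :=
      pow_ne_zero _ (Polynomial.X_sub_C_ne_zero r)
    rw [Polynomial.natDegree_mul hXne hXrne, Polynomial.natDegree_pow, Polynomial.natDegree_pow,
      Polynomial.natDegree_X, Polynomial.natDegree_X_sub_C] at hdeg
    have hdeg2 : Q.natDegree ≤ 2 * p := by
      apply Polynomial.natDegree_le_iff_coeff_eq_zero.mpr
      intro m hm
      rw [hcoeff m]
      split_ifs with h
      · simp only [Finset.mem_Icc] at h; omega
      · rfl
    omega
  intro k hk
  have := hcoeff k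
  rw [hQ0, Polynomial.coeff_zero, if_pos hk] at this
  exact this.symm
end

section
/- Let I ⊆ ℝ be an interval, let φ: I → ℝ^m be differentiable with φ(s) ≠ 0 for all s ∈ I, and let v ∈ ℝ^m be a nonzero vector such that ⟨φ'(s), v⟩ = 2 ⟨φ(s), v⟩ ⟨φ(s), φ'(s)⟩ / ‖φ(s)‖² for all s ∈ I. Then there exists a real constant C such that ⟨φ(s), v⟩ = C ‖φ(s)‖² for all s ∈ I; consequently, if C = 0 then φ(I) is contained in the hyperplane {x ∈ ℝ^m : ⟨x, v⟩ = 0}, and if C ≠ 0 then φ(I) is contained in the sphere of center v/(2C) and radius ‖v‖/(2|C|). -/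
open scoped RealInnerProductSpace

/-- if `⟨φ'(s), v⟩ = 2⟨φ(s), v⟩⟨φ(s), φ'(s)⟩/‖φ(s)‖²` on an interval `I`, then
`⟨φ(s), v⟩ = C‖φ(s)‖²` on `I` for some constant `C`; so `φ(I)` lies in the hyperplane
`⟨x, v⟩ = 0` if `C = 0`, and in the sphere of center `v/(2C)` and radius `‖v‖/(2|C|)` if
`C ≠ 0`. -/
theorem stmt13 {m : ℕ} (I : Set ℝ) (hI : I.OrdConnected)
    (φ φ' : ℝ → EuclideanSpace ℝ (Fin m))
    (hderiv : ∀ s ∈ I, HasDerivWithinAt φ (φ' s) I s)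
    (hne : ∀ s ∈ I, φ s ≠ 0)
    (v : EuclideanSpace ℝ (Fin m)) (hv : v ≠ 0)
    (hode : ∀ s ∈ I, ⟪φ' s, v⟫ = 2 * ⟪φ s, v⟫ * ⟪φ s, φ' s⟫ / ‖φ s‖ ^ 2) :
    ∃ C : ℝ, (∀ s ∈ I, ⟪φ s, v⟫ = C * ‖φ s‖ ^ 2) ∧
      (C = 0 → ∀ s ∈ I, φ s ∈ {x : EuclideanSpace ℝ (Fin m) | ⟪x, v⟫ = 0}) ∧
      (C ≠ 0 → ∀ s ∈ I, ‖φ s - (2 * C)⁻¹ • v‖ = ‖v‖ / (2 * |C|)) := by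
  rcases I.eq_empty_or_nonempty with rfl | ⟨s₀, hs₀⟩
  · exact ⟨0, fun s hs => absurd hs (Set.notMem_empty s),
      fun _ s hs => absurd hs (Set.notMem_empty s),
      fun _ s hs => absurd hs (Set.notMem_empty s)⟩
  have hconv : Convex ℝ I := Set.OrdConnected.convex hI
  set f : ℝ → ℝ := fun s => ⟪φ s, v⟫ / ‖φ s‖ ^ 2 with hf
  have hnorm_ne : ∀ s ∈ I, ‖φ s‖ ^ 2 ≠ 0 := fun s hs =>
    pow_ne_zero 2 (norm_ne_zero_iff.2 (hne s hs))
  have hfderiv : ∀ s ∈ I, HasDerivWithinAt f 0 I s := by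
    intro s hs
    have h1 : HasDerivWithinAt (fun t => ⟪φ t, v⟫) (⟪φ' s, v⟫) I s := by
      simpa using (hderiv s hs).inner ℝ (hasDerivWithinAt_const s I v)
    have h2 : HasDerivWithinAt (fun t => ‖φ t‖ ^ 2) (2 * ⟪φ s, φ' s⟫) I s := by
      have := (hderiv s hs).inner ℝ (hderiv s hs)
      have heq : ⟪φ s, φ' s⟫ + ⟪φ' s, φ s⟫ = 2 * ⟪φ s, φ' s⟫ := by
        rw [real_inner_comm (φ' s) (φ s)]; ring
      rw [heq] at this
      refine HasDerivWithinAt.congr this (fun t _ => ?_) ?_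
      · rw [real_inner_self_eq_norm_sq]
      · rw [real_inner_self_eq_norm_sq]
    have := h1.div h2 (hnorm_ne s hs)
    refine HasDerivWithinAt.congr_deriv this ?_
    rw [hode s hs, div_mul_cancel₀ _ (hnorm_ne s hs)]
    ring
  have hconst : ∀ s ∈ I, f s = f s₀ := by
    intro s hs
    have key : ∀ x ∈ I, HasFDerivWithinAt f
        (ContinuousLinearMap.smulRight (1 : ℝ →L[ℝ] ℝ) (0 : ℝ)) I x := by
      intro x hx
      exact (hfderiv x hx).hasFDerivWithinAt
    have hbound : ∀ x ∈ I,
        ‖ContinuousLinearMap.smulRight (1 : ℝ →L[ℝ] ℝ) (0 : ℝ)‖ ≤ (0 : ℝ) :=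
      fun x hx => by simp
    have := Convex.norm_image_sub_le_of_norm_hasFDerivWithin_le key hbound hconv hs₀ hs
    simp only [norm_zero, zero_mul] at this
    have := norm_le_zero_iff.1 this
    linarith [sub_eq_zero.1 this]
  refine ⟨f s₀, fun s hs => ?_, ?_, ?_⟩
  · have := hconst s hs
    have hns := hnorm_ne s hs
    have h' : ⟪φ s, v⟫ / ‖φ s‖ ^ 2 = f s₀ := this
    rw [div_eq_iff hns] at h'
    linarith [h']
  · intro hC0 s hs
    have h := hconst s hs
    rw [hC0, hf] at h
    simp only [Set.mem_setOf_eq]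
    have := hnorm_ne s hs
    exact (div_eq_zero_iff.1 h).resolve_right this
  · intro hC s hs
    set C := f s₀ with hCdef
    have hval : ⟪φ s, v⟫ = C * ‖φ s‖ ^ 2 := by
      have := hconst s hs
      have hns := hnorm_ne s hs
      have h' : ⟪φ s, v⟫ / ‖φ s‖ ^ 2 = C := this
      rw [div_eq_iff hns] at h'
      linarith [h']
    have hsq : ‖φ s - (2 * C)⁻¹ • v‖ ^ 2 = (‖v‖ / (2 * |C|)) ^ 2 := by
      rw [norm_sub_sq_real, real_inner_smul_right, hval, norm_smul,
        Real.norm_eq_abs, abs_inv, abs_mul, abs_two]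
      have hCabs : |C| ≠ 0 := abs_ne_zero.2 hC
      field_simp
      nlinarith [sq_abs C, sq_nonneg ‖v‖, sq_nonneg ‖φ s‖]
    have h1 : (0:ℝ) ≤ ‖φ s - (2 * C)⁻¹ • v‖ := norm_nonneg _
    have h2 : (0:ℝ) ≤ ‖v‖ / (2 * |C|) := by positivity
    nlinarith [hsq, h1, h2]
end
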